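/- Let A and B be disjoint finite point sets in ℝ² such that A ∪ B is in general position, and let p and q be nonnegative integers. Suppose H and H′ are open halfplanes, each containing exactly p points of A, such that |H ∩ B| < q and |H′ ∩ B| > q. Then there exists an open halfplane H″ satisfying |H″ ∩ A| = p and |H″ ∩ B| = q. -/

import Mathlib

open RealInnerProductSpace

noncomputable instance (d : ℕ) : DecidableEq (EuclideanSpace ℝ (Fin d)) := Classical.decEq _

/-- A finite point set in `ℝ^d` is in general position if every subset
of size at most `d + 1` is affinely independent. -/
def GenPos (d : ℕ) (X : Finset (EuclideanSpace ℝ (Fin d))) : Prop :=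
  ∀ S : Finset (EuclideanSpace ℝ (Fin d)), S ⊆ X → S.card ≤ d + 1 →
    AffineIndependent ℝ (fun p : S => (p : EuclideanSpace ℝ (Fin d)))

set_option linter.unusedVariables false
set_option maxHeartbeats 1000000

abbrev E2 := EuclideanSpace ℝ (Fin 2)

lemma abs_lt_sign {v e : ℝ} (h : |e| < |v|) : (0 < v + e ↔ 0 < v) ∧ (0 ≤ v + e ↔ 0 < v) := by
  rcases abs_cases v with ⟨h1, h2⟩ | ⟨h1, h2⟩ <;> rcases abs_cases e with ⟨h3, h4⟩ | ⟨h3, h4⟩ <;>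
    constructor <;> constructor <;> intro <;> linarith

lemma eps_finset {α : Type*} (S : Finset α) (f g : α → ℝ) (h : ∀ x ∈ S, f x ≠ 0) :
    ∃ ε > 0, ∀ δ : ℝ, |δ| < ε → ∀ x ∈ S, |δ * g x| < |f x| := by
  rcases S.eq_empty_or_nonempty with rfl | hne
  · exact ⟨1, one_pos, by simp⟩
  · obtain ⟨x₀, hx₀, hmin⟩ := S.exists_min_image (fun x => |f x| / (|g x| + 1)) hne
    have hpos : ∀ x ∈ S, 0 < |f x| / (|g x| + 1) := by
      intro x hx
      exact div_pos (abs_pos.2 (h x hx)) (by positivity)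
    refine ⟨_, hpos x₀ hx₀, fun δ hδ x hx => ?_⟩
    have h1 : |δ| < |f x| / (|g x| + 1) := lt_of_lt_of_le hδ (hmin x hx)
    have h2 : |δ| * (|g x| + 1) < |f x| := by
      rw [← lt_div_iff₀ (by positivity)]; exact h1
    calc |δ * g x| = |δ| * |g x| := abs_mul _ _
      _ ≤ |δ| * (|g x| + 1) := by nlinarith [abs_nonneg δ]
      _ < |f x| := h2

lemma affine_root_finite {a b : ℝ} (h : ¬ (a = 0 ∧ b = 0)) : {t : ℝ | a + t * b = 0}.Finite := by
  rcases eq_or_ne b 0 with hb | hb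
  · have ha : a ≠ 0 := fun h' => h ⟨h', hb⟩
    convert Set.finite_empty
    ext t; simp [hb, ha]
  · apply Set.Finite.subset (Set.finite_singleton (-a / b))
    intro t ht
    simp only [Set.mem_setOf_eq] at ht
    simp only [Set.mem_singleton_iff]
    field_simp
    linarith

lemma exists_avoid (Bad : Set ℝ) (hB : Bad.Finite) (ε : ℝ) (hε : 0 < ε) :
    ∃ s, 0 < s ∧ s < ε ∧ s ∉ Bad := by
  have hinf : (Set.Ioo (0:ℝ) ε).Infinite := Set.Ioo_infinite hε
  obtain ⟨s, hs⟩ := (hinf.diff hB).nonempty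
  exact ⟨s, hs.1.1, hs.1.2, hs.2⟩

-- coordinates
lemma e2_ne_zero_iff (u : E2) : u ≠ 0 ↔ (u 0 ≠ 0 ∨ u 1 ≠ 0) := by
  constructor
  · intro h
    by_contra hc
    push_neg at hc
    apply h
    ext i
    fin_cases i <;> simp [hc.1, hc.2]
  · rintro (h | h) hc <;> simp [hc] at h

lemma inner_coords (u w : E2) : ⟪u, w⟫ = u 0 * w 0 + u 1 * w 1 := by
  simp [PiLp.inner_apply, Fin.sum_univ_two, RCLike.inner_apply, mul_comm]

noncomputable def perpv (w : E2) : E2 := (WithLp.equiv 2 _).symm ![-(w 1), w 0]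

lemma perpv_apply0 (w : E2) : perpv w 0 = -(w 1) := rfl
lemma perpv_apply1 (w : E2) : perpv w 1 = w 0 := rfl

lemma exists_perp_factor {u w : E2} (hw : w ≠ 0) (h : ⟪u, w⟫ = 0) : ∃ r : ℝ, u = r • perpv w := by
  rw [inner_coords] at h
  rcases eq_or_ne (w 0) 0 with h0 | h0
  · have h1 : w 1 ≠ 0 := by
      intro h1
      apply hw; ext i; fin_cases i <;> simp [h0, h1]
    have hu1 : u 1 = 0 := by
      have := h; rw [h0] at this; simp at this
      rcases this with h' | h'
      · exact h'
      · exact absurd h' h1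
    refine ⟨-(u 0) / w 1, ?_⟩
    ext i
    fin_cases i
    · show u 0 = (-(u 0) / w 1) * (-(w 1))
      field_simp
    · show u 1 = (-(u 0) / w 1) * (w 0)
      rw [h0, hu1]; ring
  · refine ⟨u 1 / w 0, ?_⟩
    ext i
    fin_cases i
    · show u 0 = (u 1 / w 0) * (-(w 1))
      field_simp; linarith
    · show u 1 = (u 1 / w 0) * (w 0)
      field_simp

lemma coll_false {A B : Finset E2} (hgp : GenPos 2 (A ∪ B)) {x y z w : E2}
    (hx : x ∈ A ∪ B) (hy : y ∈ A ∪ B) (hz : z ∈ A ∪ B)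
    (hxy : x ≠ y) (hxz : x ≠ z) (hyz : y ≠ z) (hw : w ≠ 0)
    (h1 : ⟪y - x, w⟫ = 0) (h2 : ⟪z - x, w⟫ = 0) : False := by
  obtain ⟨r1, hr1⟩ := exists_perp_factor hw h1
  obtain ⟨r2, hr2⟩ := exists_perp_factor hw h2
  have hcol : Collinear ℝ ({x, y, z} : Set E2) := by
    rw [collinear_iff_of_mem (Set.mem_insert x {y, z})]
    refine ⟨perpv w, ?_⟩
    rintro p (rfl | rfl | rfl)
    · exact ⟨0, by simp⟩
    · exact ⟨r1, by rw [← hr1]; simp⟩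
    · exact ⟨r2, by rw [← hr2]; simp⟩
  have hS : ({x, y, z} : Finset E2) ⊆ A ∪ B := by
    intro t ht
    simp only [Finset.mem_insert, Finset.mem_singleton] at ht
    rcases ht with rfl | rfl | rfl <;> assumption
  have hcard : ({x, y, z} : Finset E2).card ≤ 3 :=
    le_trans (Finset.card_insert_le _ _) (by
      have := Finset.card_insert_le y ({z} : Finset E2)
      simp only [Finset.card_singleton] at this ⊢
      omega)
  have hai := hgp {x, y, z} hS hcard
  have hmx : x ∈ ({x, y, z} : Finset E2) := by simp
  have hmy : y ∈ ({x, y, z} : Finset E2) := by simp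
  have hmz : z ∈ ({x, y, z} : Finset E2) := by simp
  have hinj : Function.Injective (![⟨x, hmx⟩, ⟨y, hmy⟩, ⟨z, hmz⟩] : Fin 3 → ({x, y, z} : Finset E2)) := by
    intro i j hij
    fin_cases i <;> fin_cases j <;> simp_all [Subtype.ext_iff] <;> first | rfl | (exfalso; tauto)
  have hai3 : AffineIndependent ℝ (![x, y, z]) := by
    have := hai.comp_embedding ⟨_, hinj⟩
    convert this using 1
    funext i
    fin_cases i <;> rfl
  exact (affineIndependent_iff_not_collinear_set.mp hai3) hcol

noncomputable def cnt (A : Finset E2) (w x : E2) : ℕ :=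
  (A.filter fun a => ⟪x, w⟫ ≤ ⟪a, w⟫).card

noncomputable def Mf (A B : Finset E2) (p : ℕ) (w : E2) : ℕ :=
  (B.filter fun x => cnt A w x ≤ p).card

def Gen (A B : Finset E2) (w : E2) : Prop :=
  ∀ x ∈ A ∪ B, ∀ y ∈ A ∪ B, x ≠ y → ⟪x - y, w⟫ ≠ 0

lemma Gen.ne_proj {A B : Finset E2} {w : E2} (h : Gen A B w) {x y : E2}
    (hx : x ∈ A ∪ B) (hy : y ∈ A ∪ B) (hxy : x ≠ y) : ⟪x, w⟫ ≠ ⟪y, w⟫ := by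
  have := h x hx y hy hxy
  rw [inner_sub_left] at this
  intro hc; exact this (by linarith)

lemma claimA {A B : Finset E2} {p : ℕ} {w : E2} {c : ℝ}
    (hA : (A.filter fun x => c < ⟪x, w⟫).card = p) :
    (B.filter fun x => c < ⟪x, w⟫).card ≤ Mf A B p w := by
  apply Finset.card_le_card
  intro x hx
  rw [Finset.mem_filter] at hx ⊢
  refine ⟨hx.1, ?_⟩
  rw [← hA]
  apply Finset.card_le_card
  intro a ha
  rw [Finset.mem_filter] at ha ⊢
  exact ⟨ha.1, lt_of_lt_of_le hx.2 ha.2⟩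

lemma rank_exists (S : Finset E2) (w : E2)
    (hdist : ∀ x ∈ S, ∀ y ∈ S, x ≠ y → ⟪x, w⟫ ≠ ⟪y, w⟫) :
    ∀ k, k < S.card → ∃ x ∈ S, (S.filter fun y => ⟪x, w⟫ < ⟪y, w⟫).card = k := by
  intro k
  induction k with
  | zero =>
    intro hk
    have hne : S.Nonempty := Finset.card_pos.mp (by omega)
    obtain ⟨x, hx, hmax⟩ := S.exists_max_image (fun y => ⟪y, w⟫) hne
    refine ⟨x, hx, ?_⟩
    rw [Finset.card_eq_zero, Finset.filter_eq_empty_iff]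
    intro y hy
    exact not_lt.mpr (hmax y hy)
  | succ k ih =>
    intro hk
    obtain ⟨x, hx, hcard⟩ := ih (Nat.lt_of_succ_lt hk)
    set U := S.filter (fun y => ⟪x, w⟫ < ⟪y, w⟫) with hU
    set S' := S.filter (fun y => ⟪y, w⟫ < ⟪x, w⟫) with hS'
    have hne : S'.Nonempty := by
      rw [Finset.nonempty_iff_ne_empty]
      intro hemp
      have hsub : S ⊆ insert x U := by
        intro y hy
        rcases lt_trichotomy (⟪y, w⟫ : ℝ) ⟪x, w⟫ with h | h | h
        · exfalso
          have : y ∈ S' := by rw [hS', Finset.mem_filter]; exact ⟨hy, h⟩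
          rw [hemp] at this; exact absurd this (Finset.notMem_empty y)
        · have : y = x := by
            by_contra hne'
            exact hdist y hy x hx hne' h
          simp [this]
        · rw [Finset.mem_insert, hU, Finset.mem_filter]; exact Or.inr ⟨hy, h⟩
      have := Finset.card_le_card hsub
      have h2 := Finset.card_insert_le x U
      omega
    obtain ⟨x', hx'S', hmax⟩ := S'.exists_max_image (fun y => ⟪y, w⟫) hne
    have hx'S : x' ∈ S := (Finset.mem_filter.mp hx'S').1
    have hx'lt : (⟪x', w⟫ : ℝ) < ⟪x, w⟫ := (Finset.mem_filter.mp hx'S').2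
    refine ⟨x', hx'S, ?_⟩
    have hset : S.filter (fun y => ⟪x', w⟫ < ⟪y, w⟫) = insert x U := by
      ext y
      rw [Finset.mem_filter, Finset.mem_insert, hU, Finset.mem_filter]
      constructor
      · rintro ⟨hy, hlt⟩
        rcases lt_trichotomy (⟪y, w⟫ : ℝ) ⟪x, w⟫ with h | h | h
        · exfalso
          have hyS' : y ∈ S' := by rw [hS', Finset.mem_filter]; exact ⟨hy, h⟩
          exact absurd hlt (not_lt.mpr (hmax y hyS'))
        · left
          by_contra hne'
          exact hdist y hy x hx hne' h
        · exact Or.inr ⟨hy, h⟩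
      · rintro (rfl | ⟨hy, h⟩)
        · exact ⟨hx, hx'lt⟩
        · exact ⟨hy, lt_trans hx'lt h⟩
    rw [hset, Finset.card_insert_of_notMem (by
      rw [hU, Finset.mem_filter]; rintro ⟨-, h⟩; exact lt_irrefl _ h), hcard]

lemma constructC1 {A B : Finset E2} {p q : ℕ} {w : E2}
    (hdisj : Disjoint A B) (hgen : Gen A B w) (hBne : B.Nonempty) (hp : p ≤ A.card)
    (hM : Mf A B p w = q) :
    ∃ c : ℝ, (A.filter fun x => c < ⟪x, w⟫).card = p ∧
      (B.filter fun x => c < ⟪x, w⟫).card = q := by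
  rcases eq_or_lt_of_le hp with hpe | hplt
  · -- p = A.card
    have hall : ∀ x ∈ B, cnt A w x ≤ p := by
      intro x hx
      rw [hpe]
      exact Finset.card_filter_le _ _
    have hq : q = B.card := by
      rw [← hM, Mf, Finset.filter_true_of_mem hall]
    have hABne : (A ∪ B).Nonempty := Finset.Nonempty.mono Finset.subset_union_right hBne
    set m := ((A ∪ B).image (fun x => (⟪x, w⟫ : ℝ))).min' (hABne.image _) with hm
    refine ⟨m - 1, ?_, ?_⟩
    · rw [Finset.filter_true_of_mem, hpe]
      intro x hx
      have : m ≤ ⟪x, w⟫ := Finset.min'_le _ _ (Finset.mem_image_of_mem _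
        (Finset.mem_union_left _ hx))
      linarith
    · rw [Finset.filter_true_of_mem, hq]
      intro x hx
      have : m ≤ ⟪x, w⟫ := Finset.min'_le _ _ (Finset.mem_image_of_mem _
        (Finset.mem_union_right _ hx))
      linarith
  · -- p < A.card
    have hdistA : ∀ x ∈ A, ∀ y ∈ A, x ≠ y → (⟪x, w⟫ : ℝ) ≠ ⟪y, w⟫ := fun x hx y hy hxy =>
      hgen.ne_proj (Finset.mem_union_left _ hx) (Finset.mem_union_left _ hy) hxy
    obtain ⟨a₀, ha₀, hacard⟩ := rank_exists A w hdistA p hplt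
    refine ⟨⟪a₀, w⟫, hacard, ?_⟩
    rw [← hM, Mf]
    congr 1
    apply Finset.filter_congr
    intro x hx
    have hxa : x ≠ a₀ := fun h => (Finset.disjoint_right.mp hdisj hx) (h ▸ ha₀)
    have hne : (⟪x, w⟫ : ℝ) ≠ ⟪a₀, w⟫ :=
      hgen.ne_proj (Finset.mem_union_right _ hx) (Finset.mem_union_left _ ha₀) hxa
    constructor
    · intro hlt
      rw [cnt, ← hacard]
      apply Finset.card_le_card
      intro a ha
      rw [Finset.mem_filter] at ha ⊢
      exact ⟨ha.1, lt_of_lt_of_le hlt ha.2⟩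
    · intro hcnt
      rcases lt_or_gt_of_ne hne with hlt | hgt
      · exfalso
        have hsub : insert a₀ (A.filter fun a => ⟪a₀, w⟫ < ⟪a, w⟫) ⊆
            A.filter fun a => ⟪x, w⟫ ≤ ⟪a, w⟫ := by
          intro a ha
          rcases Finset.mem_insert.mp ha with rfl | ha'
          · rw [Finset.mem_filter]; exact ⟨ha₀, le_of_lt hlt⟩
          · rw [Finset.mem_filter] at ha' ⊢
            exact ⟨ha'.1, le_of_lt (lt_trans hlt ha'.2)⟩
        have hcard := Finset.card_le_card hsub
        rw [Finset.card_insert_of_notMem (by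
          rw [Finset.mem_filter]; rintro ⟨-, h⟩; exact lt_irrefl _ h), hacard] at hcard
        rw [cnt] at hcnt
        omega
      · exact hgt

lemma constructC2 {A B : Finset E2} {p q : ℕ} {w : E2} {c₀ : ℝ}
    (hdisj : Disjoint A B) (hgen : Gen A B w)
    (hA0 : (A.filter fun x => c₀ < ⟪x, w⟫).card = p)
    (hB0 : (B.filter fun x => c₀ < ⟪x, w⟫).card < q)
    (hq : q < Mf A B p w) :
    ∃ c : ℝ, (A.filter fun x => c < ⟪x, w⟫).card = p ∧
      (B.filter fun x => c < ⟪x, w⟫).card = q := by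
  have hqB : q < B.card := lt_of_lt_of_le hq (Finset.card_filter_le _ _)
  have hdistB : ∀ x ∈ B, ∀ y ∈ B, x ≠ y → (⟪x, w⟫ : ℝ) ≠ ⟪y, w⟫ := fun x hx y hy hxy =>
    hgen.ne_proj (Finset.mem_union_right _ hx) (Finset.mem_union_right _ hy) hxy
  obtain ⟨xt, hxt, hxtcard⟩ := rank_exists B w hdistB q hqB
  have hcnt : cnt A w xt ≤ p := by
    by_contra hnot
    push_neg at hnot
    have hsub : (B.filter fun x => cnt A w x ≤ p) ⊆ B.filter fun y => ⟪xt, w⟫ < ⟪y, w⟫ := by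
      intro y hy
      rw [Finset.mem_filter] at hy ⊢
      refine ⟨hy.1, ?_⟩
      have hyxt : y ≠ xt := by
        rintro rfl
        omega
      have hne := hdistB y hy.1 xt hxt hyxt
      rcases lt_or_gt_of_ne hne with hlt | hgt
      · exfalso
        have : cnt A w xt ≤ cnt A w y := by
          apply Finset.card_le_card
          intro a ha
          rw [Finset.mem_filter] at ha ⊢
          exact ⟨ha.1, le_trans (le_of_lt hlt) ha.2⟩
        omega
      · exact hgt
    have := Finset.card_le_card hsub
    rw [hxtcard] at this
    rw [Mf] at hq
    omega
  refine ⟨⟪xt, w⟫, ?_, hxtcard⟩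
  have hle : (A.filter fun x => ⟪xt, w⟫ < ⟪x, w⟫).card ≤ p := by
    apply le_trans _ hcnt
    apply Finset.card_le_card
    intro a ha
    rw [Finset.mem_filter] at ha ⊢
    exact ⟨ha.1, le_of_lt ha.2⟩
  have hxtc : (⟪xt, w⟫ : ℝ) < c₀ := by
    by_contra hnot
    push_neg at hnot
    have hsub : (B.filter fun y => ⟪xt, w⟫ < ⟪y, w⟫) ⊆ B.filter fun y => c₀ < ⟪y, w⟫ := by
      intro y hy
      rw [Finset.mem_filter] at hy ⊢
      exact ⟨hy.1, lt_of_le_of_lt hnot hy.2⟩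
    have := Finset.card_le_card hsub
    omega
  have hge : p ≤ (A.filter fun x => ⟪xt, w⟫ < ⟪x, w⟫).card := by
    rw [← hA0]
    apply Finset.card_le_card
    intro a ha
    rw [Finset.mem_filter] at ha ⊢
    exact ⟨ha.1, lt_trans hxtc ha.2⟩
  omega

noncomputable def nvec (t : ℝ) : E2 := (WithLp.equiv 2 _).symm ![1, t]

lemma nvec_apply0 (t : ℝ) : nvec t 0 = 1 := rfl
lemma nvec_apply1 (t : ℝ) : nvec t 1 = t := rfl

lemma inner_nvec (u : E2) (t : ℝ) : ⟪u, nvec t⟫ = u 0 + u 1 * t := by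
  rw [inner_coords, nvec_apply0, nvec_apply1]; ring

lemma exists_nonperp (A B : Finset E2) :
    ∃ n : E2, ∀ x ∈ A ∪ B, ∀ y ∈ A ∪ B, x ≠ y → ⟪x - y, n⟫ ≠ 0 := by
  set P := ((A ∪ B) ×ˢ (A ∪ B)).filter (fun z : E2 × E2 => z.1 ≠ z.2) with hP
  have hBad : (⋃ z ∈ P, {t : ℝ | (z.1 - z.2) 0 + t * ((z.1 - z.2) 1) = 0}).Finite := by
    apply Set.Finite.biUnion P.finite_toSet
    intro z hz
    rw [hP, Finset.coe_filter, Set.mem_setOf_eq] at hz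
    have hzne : z.1 - z.2 ≠ 0 := sub_ne_zero.mpr hz.2
    rw [e2_ne_zero_iff] at hzne
    exact affine_root_finite (by tauto)
  obtain ⟨t, -, -, ht⟩ := exists_avoid _ hBad 1 one_pos
  refine ⟨nvec t, fun x hx y hy hxy hc => ?_⟩
  apply ht
  rw [Set.mem_iUnion₂]
  refine ⟨(x, y), ?_, ?_⟩
  · rw [hP, Finset.mem_filter]
    exact ⟨Finset.mem_product.mpr ⟨hx, hy⟩, hxy⟩
  · rw [inner_nvec] at hc
    simp only [Set.mem_setOf_eq]
    linarith

lemma pert (A B : Finset E2) (v : E2) (c : ℝ) (hv : v ≠ 0) :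
    ∃ (v₀ : E2) (c₀ : ℝ), v₀ ≠ 0 ∧ Gen A B v₀ ∧
      ∀ x ∈ A ∪ B, (c₀ < ⟪x, v₀⟫ ↔ c < ⟪x, v⟫) := by
  -- step (a): move c off all projections
  obtain ⟨c₀, hc₀⟩ : ∃ c₀ : ℝ, ∀ x ∈ A ∪ B, (c₀ < ⟪x, v⟫ ↔ c < ⟪x, v⟫) ∧ ⟪x, v⟫ ≠ c₀ := by
    set U := (A ∪ B).filter (fun x => c < ⟪x, v⟫) with hU
    rcases U.eq_empty_or_nonempty with hUe | hUne
    · refine ⟨c + 1, fun x hx => ?_⟩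
      have hxle : (⟪x, v⟫ : ℝ) ≤ c := by
        by_contra hgt
        push_neg at hgt
        have : x ∈ U := by rw [hU, Finset.mem_filter]; exact ⟨hx, hgt⟩
        rw [hUe] at this; exact absurd this (Finset.notMem_empty x)
      constructor
      · constructor <;> intro <;> linarith
      · intro h; linarith
    · set m := (U.image fun x => (⟪x, v⟫ : ℝ)).min' (hUne.image _) with hm
      have hmc : c < m := by
        obtain ⟨x, hxU, hxm⟩ := Finset.mem_image.mp ((U.image fun x => (⟪x, v⟫ : ℝ)).min'_mem (hUne.image _))
        rw [hm, ← hxm]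
        exact (Finset.mem_filter.mp hxU).2
      refine ⟨(c + m) / 2, fun x hx => ?_⟩
      rcases le_or_gt (⟪x, v⟫ : ℝ) c with hle | hgt
      · constructor
        · constructor <;> intro <;> linarith
        · intro h; linarith
      · have hxU : x ∈ U := by rw [hU, Finset.mem_filter]; exact ⟨hx, hgt⟩
        have hxm : m ≤ ⟪x, v⟫ := Finset.min'_le _ _ (Finset.mem_image_of_mem _ hxU)
        constructor
        · constructor <;> intro <;> linarith
        · intro h; linarith
  obtain ⟨n, hn⟩ := exists_nonperp A B
  obtain ⟨ε, hε, heps⟩ := eps_finset (A ∪ B) (fun x => ⟪x, v⟫ - c₀) (fun x => ⟪x, n⟫)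
    (fun x hx => sub_ne_zero.mpr (hc₀ x hx).2)
  set P := ((A ∪ B) ×ˢ (A ∪ B)).filter (fun z : E2 × E2 => z.1 ≠ z.2) with hP
  have hBad : ((⋃ z ∈ P, {s : ℝ | ⟪z.1 - z.2, v⟫ + s * ⟪z.1 - z.2, n⟫ = 0}) ∪
      {s : ℝ | ⟪v, v⟫ + s * ⟪v, n⟫ = 0}).Finite := by
    apply Set.Finite.union
    · apply Set.Finite.biUnion P.finite_toSet
      intro z hz
      rw [hP, Finset.coe_filter, Set.mem_setOf_eq] at hz
      obtain ⟨hzm, hzne⟩ := hz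
      rw [Finset.mem_product] at hzm
      exact affine_root_finite (fun hb => hn _ hzm.1 _ hzm.2 hzne hb.2)
    · exact affine_root_finite (fun hb => (inner_self_ne_zero.mpr hv) hb.1)
  obtain ⟨s, hs0, hsε, hsBad⟩ := exists_avoid _ hBad ε hε
  set v₀ := v + s • n with hv₀
  have hkey : ∀ u : E2, ⟪u, v₀⟫ = ⟪u, v⟫ + s * ⟪u, n⟫ := by
    intro u
    rw [hv₀, inner_add_right, real_inner_smul_right]
  have hsabs : |s| < ε := by rw [abs_of_pos hs0]; exact hsε
  refine ⟨v₀, c₀, ?_, ?_, ?_⟩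
  · intro h0
    apply hsBad
    right
    have : ⟪v, v₀⟫ = (0 : ℝ) := by rw [h0, inner_zero_right]
    rw [hkey v] at this
    exact this
  · intro x hx y hy hxy hc
    apply hsBad
    left
    rw [Set.mem_iUnion₂]
    refine ⟨(x, y), ?_, ?_⟩
    · rw [hP, Finset.mem_filter]
      exact ⟨Finset.mem_product.mpr ⟨hx, hy⟩, hxy⟩
    · rw [hkey] at hc
      exact hc
  · intro x hx
    rw [← (hc₀ x hx).1]
    have h1 := (abs_lt_sign (heps s hsabs x hx)).1
    rw [hkey x]
    constructor <;> intro h2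
    · have : (0:ℝ) < (⟪x, v⟫ - c₀) + s * ⟪x, n⟫ := by linarith
      have := h1.mp this
      linarith
    · have : (0:ℝ) < ⟪x, v⟫ - c₀ := by linarith
      have := h1.mpr this
      linarith

def Xprod (w w' : E2) : ℝ := w 0 * w' 1 - w 1 * w' 0

lemma Xprod_ne_zero_right {w w' : E2} (h : Xprod w w' ≠ 0) : w' ≠ 0 := by
  rintro rfl
  apply h
  simp [Xprod]

lemma seg_ne_zero {wa wb : E2} (hX : Xprod wa wb ≠ 0) (t : ℝ) : wa + t • (wb - wa) ≠ 0 := by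
  intro heq
  have h0 := congrArg (fun z : E2 => z 0) heq
  have h1 := congrArg (fun z : E2 => z 1) heq
  simp only [PiLp.add_apply, PiLp.smul_apply, PiLp.sub_apply, smul_eq_mul, PiLp.zero_apply] at h0 h1
  have key : (1 - t) * (wa 0 * wb 1 - wa 1 * wb 0) = 0 := by
    linear_combination wb 1 * h0 - wb 0 * h1
  rcases mul_eq_zero.mp key with ht | hx
  · have ht1 : t = 1 := by linarith
    rw [ht1] at h0 h1
    have hb0 : wb 0 = 0 := by linarith
    have hb1 : wb 1 = 0 := by linarith
    exact hX (by rw [Xprod, hb0, hb1]; ring)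
  · exact hX hx

lemma exists_junction (A B : Finset E2) (v₀ v₁ : E2) (h0 : v₀ ≠ 0) (h1 : v₁ ≠ 0) :
    ∃ u : E2, Gen A B u ∧ Xprod v₀ u ≠ 0 ∧ Xprod u v₁ ≠ 0 := by
  set P := ((A ∪ B) ×ˢ (A ∪ B)).filter (fun z : E2 × E2 => z.1 ≠ z.2) with hP
  have hBad : ((⋃ z ∈ P, {t : ℝ | (z.1 - z.2) 0 + t * ((z.1 - z.2) 1) = 0}) ∪
      ({t : ℝ | -(v₀ 1) + t * (v₀ 0) = 0} ∪ {t : ℝ | v₁ 1 + t * (-(v₁ 0)) = 0})).Finite := by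
    refine Set.Finite.union ?_ (Set.Finite.union ?_ ?_)
    · apply Set.Finite.biUnion P.finite_toSet
      intro z hz
      rw [hP, Finset.coe_filter, Set.mem_setOf_eq] at hz
      have hzne := sub_ne_zero.mpr hz.2
      rw [e2_ne_zero_iff] at hzne
      exact affine_root_finite (by tauto)
    · rw [e2_ne_zero_iff] at h0
      apply affine_root_finite
      rintro ⟨ha, hb⟩
      rcases h0 with h | h
      · exact h hb
      · exact h (by linarith)
    · rw [e2_ne_zero_iff] at h1
      apply affine_root_finite
      rintro ⟨ha, hb⟩
      rcases h1 with h | h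
      · exact h (by linarith)
      · exact h ha
  obtain ⟨t, -, -, ht⟩ := exists_avoid _ hBad 1 one_pos
  rw [Set.mem_union, Set.mem_union, not_or, not_or] at ht
  obtain ⟨htP, ht0, ht1⟩ := ht
  refine ⟨nvec t, ?_, ?_, ?_⟩
  · intro x hx y hy hxy hc
    apply htP
    rw [Set.mem_iUnion₂]
    refine ⟨(x, y), ?_, ?_⟩
    · rw [hP, Finset.mem_filter]
      exact ⟨Finset.mem_product.mpr ⟨hx, hy⟩, hxy⟩
    · rw [inner_nvec] at hc
      simp only [Set.mem_setOf_eq]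
      linarith
  · intro hc
    apply ht0
    rw [Xprod, nvec_apply0, nvec_apply1] at hc
    simp only [Set.mem_setOf_eq]
    linarith
  · intro hc
    apply ht1
    rw [Xprod, nvec_apply0, nvec_apply1] at hc
    simp only [Set.mem_setOf_eq]
    linarith

lemma star (A B : Finset E2) (p : ℕ) (hdisj : Disjoint A B) (hgp : GenPos 2 (A ∪ B))
    (ws dir : E2) (hw : ws ≠ 0) :
    ∃ ε > 0, ∀ δ : ℝ, |δ| < ε →
      Mf A B p ws ≤ Mf A B p (ws + δ • dir) ∧
      Mf A B p (ws + δ • dir) ≤ Mf A B p ws + 1 := by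
  classical
  obtain ⟨ε, hε, heps⟩ := eps_finset ((B ×ˢ A).filter (fun z : E2 × E2 => ⟪z.2 - z.1, ws⟫ ≠ 0))
    (fun z => ⟪z.2 - z.1, ws⟫) (fun z => ⟪z.2 - z.1, dir⟫) (fun z hz => (Finset.mem_filter.mp hz).2)
  refine ⟨ε, hε, fun δ hδ => ?_⟩
  set w' := ws + δ • dir with hw'
  have hinner : ∀ u : E2, ⟪u, w'⟫ = ⟪u, ws⟫ + δ * ⟪u, dir⟫ := fun u => by
    rw [hw', inner_add_right, real_inner_smul_right]
  -- key iff for noncritical pairs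
  have hkey : ∀ x ∈ B, ∀ a ∈ A, ⟪a - x, ws⟫ ≠ 0 →
      ((⟪x, w'⟫ ≤ ⟪a, w'⟫) ↔ 0 < ⟪a - x, ws⟫) := by
    intro x hx a ha hne
    have hmem : (x, a) ∈ (B ×ˢ A).filter (fun z : E2 × E2 => ⟪z.2 - z.1, ws⟫ ≠ 0) := by
      rw [Finset.mem_filter]
      exact ⟨Finset.mem_product.mpr ⟨hx, ha⟩, hne⟩
    have habs := heps δ hδ (x, a) hmem
    have h2 := (abs_lt_sign habs).2
    constructor
    · intro hle
      apply h2.mp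
      rw [← hinner (a - x), inner_sub_left]
      linarith
    · intro hpos
      have := h2.mpr hpos
      rw [← hinner (a - x), inner_sub_left] at this
      linarith
  -- crit and base
  set crit : E2 → Finset E2 := fun x => A.filter (fun a => ⟪a - x, ws⟫ = 0) with hcrit
  set base : E2 → Finset E2 := fun x => A.filter (fun a => 0 < ⟪a - x, ws⟫) with hbase
  have hxB_AB : ∀ x ∈ B, x ∈ A ∪ B := fun x hx => Finset.mem_union_right _ hx
  have haA_AB : ∀ a ∈ A, a ∈ A ∪ B := fun a ha => Finset.mem_union_left _ ha
  have hxa_ne : ∀ x ∈ B, ∀ a ∈ A, x ≠ a := fun x hx a ha h =>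
    Finset.disjoint_right.mp hdisj hx (h ▸ ha)
  have hcrit1 : ∀ x ∈ B, (crit x).card ≤ 1 := by
    intro x hx
    rw [Finset.card_le_one]
    intro a ha b hb
    rw [hcrit, Finset.mem_filter] at ha hb
    by_contra hab
    exact coll_false hgp (hxB_AB x hx) (haA_AB a ha.1) (haA_AB b hb.1)
      (hxa_ne x hx a ha.1) (hxa_ne x hx b hb.1) hab hw ha.2 hb.2
  -- the filter at ws decomposes
  have hdecomp : ∀ x ∈ B, A.filter (fun a => ⟪x, ws⟫ ≤ ⟪a, ws⟫) = base x ∪ crit x := by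
    intro x hx
    ext a
    rw [Finset.mem_union, hbase, hcrit, Finset.mem_filter, Finset.mem_filter, Finset.mem_filter]
    constructor
    · rintro ⟨ha, hle⟩
      rcases eq_or_lt_of_le hle with heq | hlt
      · exact Or.inr ⟨ha, by rw [inner_sub_left]; linarith⟩
      · exact Or.inl ⟨ha, by rw [inner_sub_left]; linarith⟩
    · rintro (⟨ha, hpos⟩ | ⟨ha, heq⟩)
      · rw [inner_sub_left] at hpos; exact ⟨ha, by linarith⟩
      · rw [inner_sub_left] at heq; exact ⟨ha, by linarith⟩
  have hdisj_bc : ∀ x : E2, Disjoint (base x) (crit x) := by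
    intro x
    rw [Finset.disjoint_left]
    intro a ha hac
    rw [hbase, Finset.mem_filter] at ha
    rw [hcrit, Finset.mem_filter] at hac
    exact absurd hac.2 (ne_of_gt ha.2)
  have hcnt_ws : ∀ x ∈ B, cnt A ws x = (base x).card + (crit x).card := by
    intro x hx
    rw [cnt, hdecomp x hx, Finset.card_union_of_disjoint (hdisj_bc x)]
  -- base x ⊆ w'-filter ⊆ base x ∪ crit x
  have hsub1 : ∀ x ∈ B, base x ⊆ A.filter (fun a => ⟪x, w'⟫ ≤ ⟪a, w'⟫) := by
    intro x hx a ha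
    rw [hbase, Finset.mem_filter] at ha
    rw [Finset.mem_filter]
    exact ⟨ha.1, (hkey x hx a ha.1 (ne_of_gt ha.2)).mpr ha.2⟩
  have hsub2 : ∀ x ∈ B, A.filter (fun a => ⟪x, w'⟫ ≤ ⟪a, w'⟫) ⊆ base x ∪ crit x := by
    intro x hx a ha
    rw [Finset.mem_filter] at ha
    rw [Finset.mem_union, hbase, hcrit, Finset.mem_filter, Finset.mem_filter]
    rcases eq_or_ne (⟪a - x, ws⟫ : ℝ) 0 with h0 | h0
    · exact Or.inr ⟨ha.1, h0⟩
    · exact Or.inl ⟨ha.1, (hkey x hx a ha.1 h0).mp ha.2⟩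
  have hcnt_le : ∀ x ∈ B, cnt A w' x ≤ cnt A ws x := by
    intro x hx
    rw [hcnt_ws x hx, ← Finset.card_union_of_disjoint (hdisj_bc x)]
    exact Finset.card_le_card (hsub2 x hx)
  have hcnt_ge : ∀ x ∈ B, cnt A ws x ≤ cnt A w' x + 1 := by
    intro x hx
    have h1 := Finset.card_le_card (hsub1 x hx)
    have := hcrit1 x hx
    rw [hcnt_ws x hx]
    rw [cnt] at *
    omega
  constructor
  · -- Mf ws ≤ Mf w'
    apply Finset.card_le_card
    intro x hx
    rw [Finset.mem_filter] at hx ⊢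
    exact ⟨hx.1, le_trans (hcnt_le x hx.1) hx.2⟩
  · -- Mf w' ≤ Mf ws + 1
    set Flip : E2 → Prop := fun x => cnt A ws x = p + 1 ∧ (crit x).Nonempty with hFlip
    have hflip_unique : ∀ x₁ ∈ B, ∀ x₂ ∈ B, Flip x₁ → Flip x₂ → x₁ = x₂ := by
      have hhelp : ∀ x₁ ∈ B, ∀ x₂ ∈ B, Flip x₁ → Flip x₂ →
          (⟪x₁, ws⟫ : ℝ) < ⟪x₂, ws⟫ → False := by
        intro x₁ hx₁ x₂ hx₂ hf₁ hf₂ hlt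
        obtain ⟨a₁, ha₁⟩ := hf₁.2
        rw [hcrit, Finset.mem_filter] at ha₁
        have ha₁eq : (⟪a₁, ws⟫ : ℝ) = ⟪x₁, ws⟫ := by
          have := ha₁.2; rw [inner_sub_left] at this; linarith
        have hsub : insert a₁ (A.filter (fun a => ⟪x₂, ws⟫ ≤ ⟪a, ws⟫)) ⊆
            A.filter (fun a => ⟪x₁, ws⟫ ≤ ⟪a, ws⟫) := by
          intro a ha
          rcases Finset.mem_insert.mp ha with rfl | ha'
          · rw [Finset.mem_filter]; exact ⟨ha₁.1, le_of_eq ha₁eq.symm⟩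
          · rw [Finset.mem_filter] at ha' ⊢
            exact ⟨ha'.1, le_trans (le_of_lt hlt) ha'.2⟩
        have hnotmem : a₁ ∉ A.filter (fun a => ⟪x₂, ws⟫ ≤ ⟪a, ws⟫) := by
          rw [Finset.mem_filter]
          rintro ⟨-, h⟩
          rw [ha₁eq] at h
          linarith
        have hcard := Finset.card_le_card hsub
        rw [Finset.card_insert_of_notMem hnotmem] at hcard
        have e1 : cnt A ws x₁ = p + 1 := hf₁.1
        have e2 : cnt A ws x₂ = p + 1 := hf₂.1
        rw [cnt] at e1 e2
        omega
      intro x₁ hx₁ x₂ hx₂ hf₁ hf₂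
      by_contra hne
      rcases lt_trichotomy (⟪x₁, ws⟫ : ℝ) ⟪x₂, ws⟫ with h | h | h
      · exact hhelp x₁ hx₁ x₂ hx₂ hf₁ hf₂ h
      · obtain ⟨a₁, ha₁⟩ := hf₁.2
        rw [hcrit, Finset.mem_filter] at ha₁
        refine coll_false hgp (hxB_AB x₁ hx₁) (hxB_AB x₂ hx₂) (haA_AB a₁ ha₁.1)
          hne (hxa_ne x₁ hx₁ a₁ ha₁.1) (hxa_ne x₂ hx₂ a₁ ha₁.1) hw ?_ ?_
        · rw [inner_sub_left]; linarith
        · exact ha₁.2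
      · exact hhelp x₂ hx₂ x₁ hx₁ hf₂ hf₁ h
    have hflip_of : ∀ x ∈ B, cnt A w' x ≤ p → ¬ (cnt A ws x ≤ p) → Flip x := by
      intro x hx h1 h2
      push_neg at h2
      have h3 := hcnt_ge x hx
      have h4 : cnt A ws x = p + 1 := by omega
      refine ⟨h4, ?_⟩
      rw [Finset.nonempty_iff_ne_empty]
      intro hemp
      have : cnt A ws x = (base x).card := by
        rw [hcnt_ws x hx, hemp]; simp
      have hb := Finset.card_le_card (hsub1 x hx)
      rw [cnt] at h1
      rw [this] at h4
      omega
    by_cases hex : ∃ x ∈ B, Flip x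
    · obtain ⟨x₀, hx₀, hfx₀⟩ := hex
      have hsub : B.filter (fun x => cnt A w' x ≤ p) ⊆
          insert x₀ (B.filter (fun x => cnt A ws x ≤ p)) := by
        intro x hx
        rw [Finset.mem_filter] at hx
        rw [Finset.mem_insert, Finset.mem_filter]
        by_cases hm : cnt A ws x ≤ p
        · exact Or.inr ⟨hx.1, hm⟩
        · exact Or.inl (hflip_unique x hx.1 x₀ hx₀ (hflip_of x hx.1 hx.2 hm) hfx₀)
      calc Mf A B p w' ≤ (insert x₀ (B.filter (fun x => cnt A ws x ≤ p))).card :=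
            Finset.card_le_card hsub
        _ ≤ Mf A B p ws + 1 := Finset.card_insert_le _ _
    · have hsub : B.filter (fun x => cnt A w' x ≤ p) ⊆ B.filter (fun x => cnt A ws x ≤ p) := by
        intro x hx
        rw [Finset.mem_filter] at hx ⊢
        refine ⟨hx.1, ?_⟩
        by_contra hm
        exact hex ⟨x, hx.1, hflip_of x hx.1 hx.2 hm⟩
      have := Finset.card_le_card hsub
      rw [Mf, Mf]
      omega

lemma ivt_nat (F : ℝ → ℕ) (G : ℝ → Prop) (q : ℕ)
    (hstar : ∀ t₀ : ℝ, ∃ ε > 0, ∀ t : ℝ, |t - t₀| < ε → F t₀ ≤ F t ∧ F t ≤ F t₀ + 1)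
    (hD : {t : ℝ | ¬ G t}.Finite)
    (h0 : F 0 < q) (h1 : q < F 1) : ∃ t : ℝ, G t ∧ F t = q := by
  set S := {t : ℝ | 0 ≤ t ∧ q < F t} with hS
  have hSne : S.Nonempty := ⟨1, by norm_num, h1⟩
  have hSbdd : BddBelow S := ⟨0, fun t ht => ht.1⟩
  set c := sInf S with hc
  have hc0 : 0 ≤ c := le_csInf hSne (fun t ht => ht.1)
  obtain ⟨ε₀, hε₀, hst0⟩ := hstar 0
  have hlb : ∀ s ∈ S, ε₀ ≤ s := by
    intro s hs
    by_contra h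
    push_neg at h
    have habs : |s - 0| < ε₀ := by
      rw [sub_zero, abs_of_nonneg hs.1]; exact h
    have h2 := (hst0 s habs).2
    have h3 := hs.2
    omega
  have hcpos : ε₀ ≤ c := le_csInf hSne hlb
  obtain ⟨ε, hε, hst⟩ := hstar c
  have hFle : F c ≤ q := by
    by_contra hgt
    push_neg at hgt
    set t := c - min (ε / 2) (c / 2) with ht
    have hmpos : 0 < min (ε / 2) (c / 2) := lt_min (by linarith) (by linarith)
    have habs : |t - c| < ε := by
      rw [ht, show c - min (ε / 2) (c / 2) - c = -(min (ε / 2) (c / 2)) by ring, abs_neg,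
        abs_of_pos hmpos]
      exact lt_of_le_of_lt (min_le_left _ _) (by linarith)
    have hFt := (hst t habs).1
    have htS : t ∈ S := by
      constructor
      · have : min (ε / 2) (c / 2) ≤ c / 2 := min_le_right _ _
        rw [ht]; linarith
      · omega
    have := csInf_le hSbdd htS
    rw [ht] at this
    linarith
  have hFge : q ≤ F c := by
    obtain ⟨s, hsS, hslt⟩ := exists_lt_of_csInf_lt hSne (show sInf S < c + ε by rw [← hc]; linarith)
    have hsge : c ≤ s := csInf_le hSbdd hsS
    have habs : |s - c| < ε := by
      rw [abs_of_nonneg (by linarith)]; linarith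
    have h2 := (hst s habs).2
    have h3 := hsS.2
    omega
  -- find a good witness slightly to the left
  have hlpos : 0 < min ε c := lt_min hε (by linarith)
  have hinf : (Set.Ioo (c - min ε c) c).Infinite := Set.Ioo_infinite (by linarith)
  obtain ⟨s, hs⟩ := (hinf.diff hD).nonempty
  obtain ⟨⟨hsl, hsr⟩, hsG⟩ := hs
  have hGs : G s := not_not.mp hsG
  have habs : |s - c| < ε := by
    rw [abs_of_nonpos (by linarith), neg_sub]
    have : min ε c ≤ ε := min_le_left _ _
    linarith
  have h2 := hst s habs
  have hsnot : s ∉ S := by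
    intro hmem
    have := csInf_le hSbdd hmem
    rw [← hc] at this
    linarith
  have hs0 : 0 ≤ s := by
    have : c - min ε c ≥ 0 := by
      have : min ε c ≤ c := min_le_right _ _
      linarith
    linarith
  have hFs : ¬ q < F s := fun hq => hsnot ⟨hs0, hq⟩
  refine ⟨s, hGs, ?_⟩
  omega

lemma seg_lemma (A B : Finset E2) (p q : ℕ) (hdisj : Disjoint A B) (hgp : GenPos 2 (A ∪ B))
    (wa wb : E2) (hga : Gen A B wa) (hgb : Gen A B wb) (hwa : wa ≠ 0)
    (hX : Xprod wa wb ≠ 0) (hqa : Mf A B p wa ≤ q) (hqb : q ≤ Mf A B p wb) :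
    ∃ w : E2, w ≠ 0 ∧ Gen A B w ∧ Mf A B p w = q := by
  rcases eq_or_lt_of_le hqa with he | hlta
  · exact ⟨wa, hwa, hga, he⟩
  rcases eq_or_lt_of_le hqb with he | hltb
  · exact ⟨wb, Xprod_ne_zero_right hX, hgb, he.symm⟩
  set wt : ℝ → E2 := fun t => wa + t • (wb - wa) with hwt
  have hwt0 : wt 0 = wa := by rw [hwt]; simp
  have hwt1 : wt 1 = wb := by rw [hwt]; simp
  have hshift : ∀ t₀ t : ℝ, wt t = wt t₀ + (t - t₀) • (wb - wa) := by
    intro t₀ t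
    rw [hwt]
    simp only
    module
  have hstar' : ∀ t₀ : ℝ, ∃ ε > 0, ∀ t : ℝ, |t - t₀| < ε →
      Mf A B p (wt t₀) ≤ Mf A B p (wt t) ∧ Mf A B p (wt t) ≤ Mf A B p (wt t₀) + 1 := by
    intro t₀
    obtain ⟨ε, hε, hs⟩ := star A B p hdisj hgp (wt t₀) (wb - wa) (seg_ne_zero hX t₀)
    refine ⟨ε, hε, fun t ht => ?_⟩
    rw [hshift t₀ t]
    exact hs (t - t₀) ht
  have hD : {t : ℝ | ¬ Gen A B (wt t)}.Finite := by
    have hfin : ∀ z ∈ ((((A ∪ B) ×ˢ (A ∪ B)).filter (fun z : E2 × E2 => z.1 ≠ z.2) : Finset (E2 × E2)) : Set (E2 × E2)),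
        {t : ℝ | ⟪z.1 - z.2, wa⟫ + t * ⟪z.1 - z.2, wb - wa⟫ = 0}.Finite := by
      intro z hz
      rw [Finset.mem_coe, Finset.mem_filter] at hz
      obtain ⟨hzm, hzne⟩ := hz
      rw [Finset.mem_product] at hzm
      exact affine_root_finite (fun hb => hga _ hzm.1 _ hzm.2 hzne hb.1)
    apply Set.Finite.subset (Set.Finite.biUnion (Finset.finite_toSet _) hfin)
    intro t ht
    simp only [Set.mem_setOf_eq, Gen] at ht
    push_neg at ht
    obtain ⟨x, hx, y, hy, hxy, hc⟩ := ht
    rw [Set.mem_iUnion₂]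
    refine ⟨(x, y), ?_, ?_⟩
    · rw [Finset.mem_coe, Finset.mem_filter]
      exact ⟨Finset.mem_product.mpr ⟨hx, hy⟩, hxy⟩
    · rw [hwt] at hc
      simp only at hc
      rw [inner_add_right, real_inner_smul_right] at hc
      exact hc
  obtain ⟨t, hGt, hFt⟩ := ivt_nat (fun t => Mf A B p (wt t)) (fun t => Gen A B (wt t)) q hstar' hD
    (by show Mf A B p (wt 0) < q; rw [hwt0]; exact hlta) (by show q < Mf A B p (wt 1); rw [hwt1]; exact hltb)
  exact ⟨wt t, seg_ne_zero hX t, hGt, hFt⟩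


theorem halfplane_intermediate_value
    (A B : Finset (EuclideanSpace ℝ (Fin 2)))
    (hAB : Disjoint A B) (hgp : GenPos 2 (A ∪ B))
    (p q : ℕ)
    (v : EuclideanSpace ℝ (Fin 2)) (c : ℝ) (hv : v ≠ 0)
    (v' : EuclideanSpace ℝ (Fin 2)) (c' : ℝ) (hv' : v' ≠ 0)
    (hA1 : (A.filter (fun x => c < ⟪x, v⟫)).card = p)
    (hA2 : (A.filter (fun x => c' < ⟪x, v'⟫)).card = p)
    (hB1 : (B.filter (fun x => c < ⟪x, v⟫)).card < q)
    (hB2 : q < (B.filter (fun x => c' < ⟪x, v'⟫)).card) :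
    ∃ (v'' : EuclideanSpace ℝ (Fin 2)) (c'' : ℝ), v'' ≠ 0 ∧
      (A.filter (fun x => c'' < ⟪x, v''⟫)).card = p ∧
      (B.filter (fun x => c'' < ⟪x, v''⟫)).card = q := by
  classical
  have hBne : B.Nonempty := by
    rw [← Finset.card_pos]
    have := Finset.card_filter_le B (fun x => c' < ⟪x, v'⟫)
    omega
  have hp : p ≤ A.card := by
    rw [← hA1]; exact Finset.card_filter_le _ _
  -- perturb both halfplanes to generic directions
  obtain ⟨v₀, c₀, hv₀, hg₀, hiff₀⟩ := pert A B v c hv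
  obtain ⟨v₁, c₁, hv₁, hg₁, hiff₁⟩ := pert A B v' c' hv'
  have hAf₀ : A.filter (fun x => c₀ < ⟪x, v₀⟫) = A.filter (fun x => c < ⟪x, v⟫) :=
    Finset.filter_congr (fun x hx => hiff₀ x (Finset.mem_union_left _ hx))
  have hBf₀ : B.filter (fun x => c₀ < ⟪x, v₀⟫) = B.filter (fun x => c < ⟪x, v⟫) :=
    Finset.filter_congr (fun x hx => hiff₀ x (Finset.mem_union_right _ hx))
  have hAf₁ : A.filter (fun x => c₁ < ⟪x, v₁⟫) = A.filter (fun x => c' < ⟪x, v'⟫) :=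
    Finset.filter_congr (fun x hx => hiff₁ x (Finset.mem_union_left _ hx))
  have hBf₁ : B.filter (fun x => c₁ < ⟪x, v₁⟫) = B.filter (fun x => c' < ⟪x, v'⟫) :=
    Finset.filter_congr (fun x hx => hiff₁ x (Finset.mem_union_right _ hx))
  have hA₀ : (A.filter (fun x => c₀ < ⟪x, v₀⟫)).card = p := by rw [hAf₀]; exact hA1
  have hB₀ : (B.filter (fun x => c₀ < ⟪x, v₀⟫)).card < q := by rw [hBf₀]; exact hB1
  have hA₁ : (A.filter (fun x => c₁ < ⟪x, v₁⟫)).card = p := by rw [hAf₁]; exact hA2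
  have hB₁ : q < (B.filter (fun x => c₁ < ⟪x, v₁⟫)).card := by rw [hBf₁]; exact hB2
  have hMv₁ : q < Mf A B p v₁ := lt_of_lt_of_le hB₁ (claimA hA₁)
  rcases lt_trichotomy (Mf A B p v₀) q with hlt | heq | hgt
  · -- walk from v₀ to v₁ through a junction u
    obtain ⟨u, hgu, hXu0, hXu1⟩ := exists_junction A B v₀ v₁ hv₀ hv₁
    have hu : u ≠ 0 := Xprod_ne_zero_right hXu0
    have hfind : ∃ w : E2, w ≠ 0 ∧ Gen A B w ∧ Mf A B p w = q := by
      rcases le_or_gt q (Mf A B p u) with hle | hlt'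
      · exact seg_lemma A B p q hAB hgp v₀ u hg₀ hgu hv₀ hXu0 (le_of_lt hlt) hle
      · exact seg_lemma A B p q hAB hgp u v₁ hgu hg₁ hu hXu1 (le_of_lt hlt') (le_of_lt hMv₁)
    obtain ⟨w, hw, hgw, hMw⟩ := hfind
    obtain ⟨c'', h1, h2⟩ := constructC1 hAB hgw hBne hp hMw
    exact ⟨w, c'', hw, h1, h2⟩
  · obtain ⟨c'', h1, h2⟩ := constructC1 hAB hg₀ hBne hp heq
    exact ⟨v₀, c'', hv₀, h1, h2⟩
  · obtain ⟨c'', h1, h2⟩ := constructC2 hAB hg₀ hA₀ hB₀ hgt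
    exact ⟨v₀, c'', hv₀, h1, h2⟩
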